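/- Let E be a real inner product space, let ε > 0, and let x₁, x₂ ∈ E with x₁ ≠ x₂ and d := ‖x₂ − x₁‖ ≤ 2ε. Let x_t ∈ E with x_t ≠ x₁ and ‖x_t − x₂‖ ≤ ε. If the normalised inner product φ := ⟨x₂ − x₁, x_t − x₁⟩ / (‖x₂ − x₁‖ · ‖x_t − x₁‖) satisfies φ ≥ (1/2)(1 + d/ε), then every point x on the line segment L connecting x₁ to x_t (i.e. every x = (1 − t) x₁ + t x_t with t ∈ [0, 1]) satisfies ‖x − x₁‖ ≤ ε or ‖x − x₂‖ ≤ ε. -/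

import Mathlib

open RealInnerProductSpace

set_option maxHeartbeats 1000000 in
/-- Theorem 1 (Maximum Angle of Deviation): if the normalised inner product between
`x₂ - x₁` and `x_t - x₁` is at least `(1/2)(1 + d/ε)`, then every point on the segment
from `x₁` to `x_t` is within `ε` of `x₁` or of `x₂`. -/
theorem maximum_angle_of_deviation
    {E : Type*} [NormedAddCommGroup E] [InnerProductSpace ℝ E]
    (ε : ℝ) (hε : 0 < ε) (x₁ x₂ xt : E) (hx : x₁ ≠ x₂) (hxt : xt ≠ x₁)
    (hd : ‖x₂ - x₁‖ ≤ 2 * ε) (hxt2 : ‖xt - x₂‖ ≤ ε)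
    (hφ : ⟪x₂ - x₁, xt - x₁⟫ / (‖x₂ - x₁‖ * ‖xt - x₁‖) ≥ (1 / 2) * (1 + ‖x₂ - x₁‖ / ε)) :
    ∀ t : ℝ, t ∈ Set.Icc (0 : ℝ) 1 →
      ‖((1 - t) • x₁ + t • xt) - x₁‖ ≤ ε ∨ ‖((1 - t) • x₁ + t • xt) - x₂‖ ≤ ε := by
  intro t ht
  obtain ⟨ht0, ht1⟩ := ht
  set u := x₂ - x₁ with hu
  set v := xt - x₁ with hv
  have hd0 : 0 < ‖u‖ := by
    rw [norm_pos_iff]; exact sub_ne_zero.mpr (Ne.symm hx)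
  have hr0 : 0 < ‖v‖ := by
    rw [norm_pos_iff]; exact sub_ne_zero.mpr hxt
  have h1 : ((1 - t) • x₁ + t • xt) - x₁ = t • v := by
    rw [hv]; module
  have h2 : ((1 - t) • x₁ + t • xt) - x₂ = t • v - u := by
    rw [hu, hv]; module
  rw [h1, h2]
  have hnorm1 : ‖t • v‖ = t * ‖v‖ := by
    rw [norm_smul, Real.norm_eq_abs, abs_of_nonneg ht0]
  by_cases hcase : t * ‖v‖ ≤ ε
  · left; rw [hnorm1]; exact hcase
  · right
    push_neg at hcase
    have hφ' : ⟪u, v⟫ ≥ (1 / 2) * (1 + ‖u‖ / ε) * (‖u‖ * ‖v‖) := by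
      have hpos : 0 < ‖u‖ * ‖v‖ := mul_pos hd0 hr0
      rw [ge_iff_le, ← le_div_iff₀ hpos]
      exact hφ
    have hinner : (ε + ‖u‖) * (‖u‖ * ‖v‖) ≤ 2 * ε * ⟪u, v⟫ := by
      have h := mul_le_mul_of_nonneg_left hφ' (by positivity : (0:ℝ) ≤ 2 * ε)
      have heq : 2 * ε * ((1 / 2) * (1 + ‖u‖ / ε) * (‖u‖ * ‖v‖))
          = (ε + ‖u‖) * (‖u‖ * ‖v‖) := by
        field_simp
      linarith [heq ▸ h]
    have hclose : ‖v - u‖ ≤ ε := by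
      have hvu : v - u = xt - x₂ := by rw [hu, hv]; abel
      rw [hvu]; exact hxt2
    have hcomm : (⟪v, u⟫ : ℝ) = ⟪u, v⟫ := real_inner_comm u v
    have hclose2 : ‖v‖ ^ 2 - 2 * ⟪u, v⟫ + ‖u‖ ^ 2 ≤ ε ^ 2 := by
      have hns := norm_sub_sq_real v u
      rw [hcomm] at hns
      nlinarith [norm_nonneg (v - u), hε.le]
    have hsq : ‖t • v - u‖ ^ 2 = t ^ 2 * ‖v‖ ^ 2 - 2 * (t * ⟪u, v⟫) + ‖u‖ ^ 2 := by
      rw [norm_sub_sq_real, real_inner_smul_left, norm_smul, Real.norm_eq_abs,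
        abs_of_nonneg ht0, mul_pow, hcomm]
    set d := ‖u‖ with hdd
    set r := ‖v‖ with hrr
    set I := (⟪u, v⟫ : ℝ) with hI
    have hs_le_r : t * r ≤ r := by nlinarith
    have hrε : ε < r := lt_of_lt_of_le hcase hs_le_r
    -- left endpoint bound (scaled by r²)
    have hQε : ε ^ 2 * r ^ 2 - 2 * ε * I * r + d ^ 2 * r ^ 2 ≤ r ^ 2 * ε ^ 2 := by
      have hm := mul_le_mul_of_nonneg_right hinner hr0.le
      nlinarith [mul_pos (mul_pos hε hd0) (mul_pos hr0 hr0)]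
    have hQε' : (1 - t) * (ε ^ 2 * r ^ 2 - 2 * ε * I * r + d ^ 2 * r ^ 2)
        ≤ (1 - t) * (r ^ 2 * ε ^ 2) :=
      mul_le_mul_of_nonneg_left hQε (by linarith)
    -- right endpoint bound (scaled by r)
    have hq1 : (t * r - ε) * (r * (r ^ 2 - 2 * I + d ^ 2)) ≤ (t * r - ε) * (r * ε ^ 2) :=
      mul_le_mul_of_nonneg_left
        (mul_le_mul_of_nonneg_left hclose2 hr0.le) (by linarith)
    have h3 : 0 ≤ (t * r - ε) * (1 - t) * r ^ 2 * (r - ε) := by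
      apply mul_nonneg
      apply mul_nonneg
      apply mul_nonneg (by linarith) (by linarith)
      · positivity
      · linarith
    have hid : r * (r - ε) * (t ^ 2 * r ^ 2 - 2 * (t * I) + d ^ 2)
        = (1 - t) * (ε ^ 2 * r ^ 2 - 2 * ε * I * r + d ^ 2 * r ^ 2)
          + (t * r - ε) * (r * (r ^ 2 - 2 * I + d ^ 2))
          - (t * r - ε) * (1 - t) * r ^ 2 * (r - ε) := by ring
    have hsum : (1 - t) * (r ^ 2 * ε ^ 2) + (t * r - ε) * (r * ε ^ 2)
        = r * (r - ε) * ε ^ 2 := by ring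
    have hfinal : r * (r - ε) * (t ^ 2 * r ^ 2 - 2 * (t * I) + d ^ 2)
        ≤ r * (r - ε) * ε ^ 2 := by
      rw [hid, ← hsum]; linarith
    have hpos : 0 < r * (r - ε) := mul_pos hr0 (by linarith)
    have key : ‖t • v - u‖ ^ 2 ≤ ε ^ 2 := by
      rw [hsq]
      exact (mul_le_mul_iff_right₀ hpos).mp hfinal
    nlinarith [norm_nonneg (t • v - u), key, hε]
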